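/- Let H be a hypohamiltonian snark and x, y a pair of distinct nonadjacent vertices of H. Then there exists a neighbor x' of x such that H − y has a right-good 2-factor with respect to x that does not contain the edge xx'. (This is the 2-factor criterion showing that the superedge H_{x,y} is j-right for at least one j ∈ {1,2,3}.) -/

import Mathlib

open SimpleGraph

/-- A proper edge-coloring of `G` with `n` colors. -/
def ProperEdgeColoring {V : Type*} {n : ℕ} (G : SimpleGraph V) (σ : Sym2 V → Fin n) : Prop :=
  ∀ e₁ ∈ G.edgeSet, ∀ e₂ ∈ G.edgeSet, e₁ ≠ e₂ → (∃ v, v ∈ e₁ ∧ v ∈ e₂) → σ e₁ ≠ σ e₂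

/-- A graph `G` is hypohamiltonian if for every vertex `v`, the graph `G − v`
has a Hamiltonian cycle. -/
def Hypohamiltonian {V : Type*} [DecidableEq V] (G : SimpleGraph V) : Prop :=
  ∀ v : V, ∃ (a : ↥{w : V | w ≠ v}) (c : (SimpleGraph.induce {w : V | w ≠ v} G).Walk a a),
    c.IsHamiltonianCycle

/-- `F` is a 2-factor of `H − y`, viewed as a subgraph of `H` on the full vertex set:
`F ≤ H`, no edge of `F` is incident to `y`, and every vertex other than `y` has degree
exactly `2` in `F`. -/
def IsTwoFactorOfDelete {V : Type*} (H F : SimpleGraph V) (y : V) : Prop :=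
  F ≤ H ∧ (∀ v : V, ¬ F.Adj y v) ∧ ∀ v : V, v ≠ y → (F.neighborSet v).ncard = 2

/-- A 2-factor `F` of `H − y` is right-good with respect to `x` if the component of `F`
containing `x` is a cycle of odd length and every other component of `F` is a cycle of even
length.  (For a 2-regular graph every component is a cycle whose length equals the number
of its vertices.) -/
def RightGood {V : Type*} (F : SimpleGraph V) (x y : V) : Prop :=
  Odd {u : V | F.Reachable u x}.ncard ∧
  ∀ v : V, v ≠ y → ¬ F.Reachable v x → Even {u : V | F.Reachable u v}.ncard

section Aux

variable {V : Type*} {G : SimpleGraph V}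

lemma walk_support_eq_map {u v : V} (p : G.Walk u v) :
    p.support = (List.range (p.length + 1)).map p.getVert := by
  induction p with
  | nil => simp [List.range_succ]
  | cons h p ih =>
    rw [Walk.support_cons, ih, Walk.length_cons,
      show (List.range (p.length + 1 + 1)) = 0 :: (List.range (p.length + 1)).map Nat.succ from
        List.range_succ_eq_map]
    simp [List.map_map, Function.comp_def, Walk.getVert_cons_succ]

lemma cycle_getVert_inj {v : V} {c : G.Walk v v} (hc : c.IsCycle)
    {i j : ℕ} (hi : i < c.length) (hj : j < c.length)
    (h : c.getVert (i + 1) = c.getVert (j + 1)) : i = j := by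
  have hnd := hc.support_nodup
  rw [walk_support_eq_map, List.range_succ_eq_map, List.map_cons, List.tail_cons,
    List.map_map] at hnd
  have hinj := List.nodup_iff_injective_get.mp hnd
  have h2 : ((List.range c.length).map (c.getVert ∘ Nat.succ)).get
      ⟨i, by simpa using hi⟩ = ((List.range c.length).map (c.getVert ∘ Nat.succ)).get
      ⟨j, by simpa using hj⟩ := by
    simp only [List.get_eq_getElem, List.getElem_map, List.getElem_range, Function.comp_apply]
    simpa [Nat.succ_eq_add_one] using h
  simpa using congrArg Fin.val (hinj h2)

lemma cycle_neighborSet_start {v : V} {c : G.Walk v v} (hc : c.IsCycle) :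
    c.toSubgraph.neighborSet v = {c.getVert 1, c.getVert (c.length - 1)} := by
  have h3 := hc.three_le_length
  ext u
  simp only [Subgraph.mem_neighborSet, Set.mem_insert_iff, Set.mem_singleton_iff]
  constructor
  · intro hadj
    obtain ⟨i, he, hi⟩ := (Walk.toSubgraph_adj_iff _).mp hadj
    rw [Sym2.eq_iff] at he
    rcases he with ⟨h1, h2⟩ | ⟨h1, h2⟩
    · rcases Nat.eq_zero_or_pos i with h0 | h0
      · left; rw [← h2, h0]
      · exfalso
        obtain ⟨i', rfl⟩ := Nat.exists_eq_add_of_lt h0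
        rw [zero_add] at *
        have : c.getVert (i' + 1) = c.getVert ((c.length - 1) + 1) := by
          rw [h1, Nat.sub_add_cancel (by omega), Walk.getVert_length]
        have := cycle_getVert_inj hc (by omega) (by omega) this
        omega
    · right
      rcases Nat.lt_or_ge i (c.length - 1) with h0 | h0
      · exfalso
        have : c.getVert (i + 1) = c.getVert ((c.length - 1) + 1) := by
          rw [h2, Nat.sub_add_cancel (by omega), Walk.getVert_length]
        have := cycle_getVert_inj hc (by omega) (by omega) this
        omega
      · have : i = c.length - 1 := by omega
        rw [← h1, this]
  · rintro (rfl | rfl)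
    · have := Walk.toSubgraph_adj_getVert c (by omega : 0 < c.length)
      simpa using this
    · have := Walk.toSubgraph_adj_getVert c (by omega : c.length - 1 < c.length)
      rw [Nat.sub_add_cancel (by omega), Walk.getVert_length] at this
      exact this.symm

lemma cycle_neighborSet_ncard {v w : V} {c : G.Walk v v} (hc : c.IsCycle)
    (hw : w ∈ c.support) : (c.toSubgraph.neighborSet w).ncard = 2 := by
  classical
  have h3 := hc.three_le_length
  have hrot : (c.rotate w hw).toSubgraph = c.toSubgraph := Walk.toSubgraph_rotate c hw
  have hc' : (c.rotate w hw).IsCycle := hc.rotate hw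
  rw [← hrot, cycle_neighborSet_start hc']
  have hlen : (c.rotate w hw).length = c.length := by
    rw [Walk.rotate, Walk.length_append, add_comm, ← Walk.length_append, Walk.take_spec]
  refine Set.ncard_pair ?_
  intro h
  have : (c.rotate w hw).getVert (0 + 1) = (c.rotate w hw).getVert ((c.length - 2) + 1) := by
    rw [zero_add, h]; congr 1; omega
  have := cycle_getVert_inj hc' (by omega) (by omega) this
  omega

end Aux

/-- Let `H` be a hypohamiltonian snark and `x, y` a pair of distinct nonadjacent vertices of
`H`.  Then there exists a neighbor `x'` of `x` such that `H − y` has a right-good 2-factor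
with respect to `x` not containing the edge `xx'`. -/
theorem hypohamiltonian_snark_exists_rightGood_two_factor
    {V : Type*} [Fintype V] [DecidableEq V] (H : SimpleGraph V)
    (hcubic : ∀ v : V, (H.neighborSet v).ncard = 3)
    (hconn : H.Connected)
    (hbridgeless : ∀ e ∈ H.edgeSet, ¬ H.IsBridge e)
    (hnot3 : ¬ ∃ τ : Sym2 V → Fin 3, ProperEdgeColoring H τ)
    (hhypo : Hypohamiltonian H)
    (x y : V) (hxy : x ≠ y) (hnadj : ¬ H.Adj x y) :
    ∃ x' : V, H.Adj x x' ∧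
      ∃ F : SimpleGraph V, IsTwoFactorOfDelete H F y ∧ RightGood F x y ∧ ¬ F.Adj x x' := by
  classical
  obtain ⟨a, c, hham⟩ := hhypo y
  set S : Set V := {w : V | w ≠ y} with hS
  have hcyc : c.IsCycle := hham.isCycle
  -- the lifted 2-factor
  set F : SimpleGraph V :=
    { Adj := fun u w => ∃ (hu : u ∈ S) (hw : w ∈ S), c.toSubgraph.Adj ⟨u, hu⟩ ⟨w, hw⟩
      symm := ⟨by rintro u w ⟨hu, hw, h⟩; exact ⟨hw, hu, h.symm⟩⟩
      loopless := ⟨by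
        rintro u ⟨hu, hu', h⟩
        exact ((SimpleGraph.induce S H).loopless.irrefl _) (c.toSubgraph.adj_sub h)⟩ } with hF
  have hFadj : ∀ u w : V, F.Adj u w ↔
      ∃ (hu : u ∈ S) (hw : w ∈ S), c.toSubgraph.Adj ⟨u, hu⟩ ⟨w, hw⟩ := fun _ _ => Iff.rfl
  have hFle : F ≤ H := by
    rintro u w ⟨hu, hw, h⟩
    simpa using c.toSubgraph.adj_sub h
  have hFy : ∀ v : V, ¬ F.Adj y v := by
    rintro v ⟨hy, -, -⟩
    exact hy rfl
  -- neighbor sets of F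
  have hnbr : ∀ (v : V) (hv : v ∈ S),
      F.neighborSet v = Subtype.val '' (c.toSubgraph.neighborSet ⟨v, hv⟩) := by
    intro v hv
    ext u
    constructor
    · rintro ⟨hv', hu, h⟩
      exact ⟨⟨u, hu⟩, h, rfl⟩
    · rintro ⟨⟨u', hu'⟩, h, rfl⟩
      exact ⟨hv, hu', h⟩
  have hmem : ∀ (v : V) (hv : v ∈ S), (⟨v, hv⟩ : ↥S) ∈ c.support := fun v hv =>
    hham.mem_support ⟨v, hv⟩
  have hdeg : ∀ v : V, v ≠ y → (F.neighborSet v).ncard = 2 := by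
    intro v hv
    rw [hnbr v hv, Set.ncard_image_of_injective _ Subtype.val_injective]
    exact cycle_neighborSet_ncard hcyc (hmem v hv)
  -- reachability
  have hxS : x ∈ S := hxy
  have hreach : ∀ (u : V), u ∈ S → F.Reachable u x := by
    intro u hu
    have hconn' : c.toSubgraph.coe.Connected := c.toSubgraph_connected
    have hu' : (⟨u, hu⟩ : ↥S) ∈ c.toSubgraph.verts :=
      (Walk.mem_verts_toSubgraph c).mpr (hmem u hu)
    have hx' : (⟨x, hxS⟩ : ↥S) ∈ c.toSubgraph.verts :=
      (Walk.mem_verts_toSubgraph c).mpr (hmem x hxS)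
    have hr := hconn'.preconnected ⟨⟨u, hu⟩, hu'⟩ ⟨⟨x, hxS⟩, hx'⟩
    let φ : c.toSubgraph.coe →g F :=
      ⟨fun b => (b.val : V), by
        rintro ⟨⟨b1, hb1⟩, hb1'⟩ ⟨⟨b2, hb2⟩, hb2'⟩ hadj
        exact ⟨hb1, hb2, hadj⟩⟩
    exact hr.map φ
  have hreachSet : {u : V | F.Reachable u x} = S := by
    ext u
    constructor
    · intro hr
      obtain ⟨w⟩ := hr
      intro hu
      subst hu
      cases w with
      | nil => exact hxy rfl
      | cons h _ => exact hFy _ h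
    · exact hreach u
  -- cardinalities
  have hScard : S.ncard = Fintype.card V - 1 := by
    have : S = Set.univ \ {y} := by ext u; simp [hS]
    rw [this, Set.ncard_diff (by simp), Set.ncard_univ, Set.ncard_singleton,
      Nat.card_eq_fintype_card]
  have hEven : Even (Fintype.card V) := by
    have hdegH : ∀ v : V, H.degree v = 3 := by
      intro v
      have := hcubic v
      rwa [Set.ncard_eq_toFinset_card', Set.toFinset_card, card_neighborSet_eq_degree] at this
    have hsum := H.sum_degrees_eq_twice_card_edges
    have : 3 * Fintype.card V = 2 * H.edgeFinset.card := by
      rw [← hsum]; simp [hdegH, mul_comm]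
    have heven : Even (3 * Fintype.card V) := ⟨H.edgeFinset.card, by omega⟩
    rcases Nat.even_mul.mp heven with h | h
    · exact absurd h (by decide)
    · exact h
  have hcard1 : 1 ≤ Fintype.card V := Fintype.card_pos_iff.mpr ⟨x⟩
  have hOdd : Odd {u : V | F.Reachable u x}.ncard := by
    rw [hreachSet, hScard]
    exact Nat.Even.sub_odd hcard1 hEven odd_one
  -- right-goodness
  have hrg : RightGood F x y := by
    refine ⟨hOdd, fun v hv hnr => absurd (hreach v hv) hnr⟩
  -- find x'
  have hsub : F.neighborSet x ⊆ H.neighborSet x := fun u hu => hFle hu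
  have hx' : ∃ x', x' ∈ H.neighborSet x \ F.neighborSet x := by
    by_contra h
    push_neg at h
    have hsub2 : H.neighborSet x ⊆ F.neighborSet x := by
      intro u hu
      by_contra h2
      exact h u ⟨hu, h2⟩
    have := Set.ncard_le_ncard hsub2 (Set.toFinite _)
    rw [hcubic x, hdeg x hxy] at this
    omega
  obtain ⟨x', hx'mem, hx'not⟩ := hx'
  exact ⟨x', hx'mem, F, ⟨hFle, hFy, hdeg⟩, hrg, hx'not⟩
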